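/- Let n ∈ ℕ, let \tilde{R}_n be a symmetrized Hammersley type point set with N = 2^{n+2} points (for an arbitrary fixed choice function σ), and let D be its local discrepancy function. For every k ∈ ℕ₀ with k ≥ n and every m ∈ {0,…,2^k−1}, |μ_{(−1,k),(0,m)}(D)| = |∫_{[0,1)^2} D(t)·h_{k,m}(t2) dt| = 2^{−(2k+3)}, and likewise |μ_{(k,−1),(m,0)}(D)| = 2^{−(2k+3)}. -/

import Mathlib

open MeasureTheory Set

/-- The L∞-normalized Haar function `h_{j,m}` on `[0,1)`: it is `+1` on the left half
`[2m/2^{j+1}, (2m+1)/2^{j+1})` of the dyadic interval `I_{j,m}`, `-1` on the right half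
`[(2m+1)/2^{j+1}, (2m+2)/2^{j+1})`, and `0` elsewhere. -/
noncomputable def haar (j m : ℕ) (t : ℝ) : ℝ :=
  if (2 * m : ℝ) / 2 ^ (j + 1) ≤ t ∧ t < (2 * m + 1 : ℝ) / 2 ^ (j + 1) then 1
  else if (2 * m + 1 : ℝ) / 2 ^ (j + 1) ≤ t ∧ t < (2 * m + 2 : ℝ) / 2 ^ (j + 1) then -1
  else 0

/-- First coordinate of a point of the Hammersley type point set:
`t_n/2 + t_{n-1}/2^2 + ⋯ + t_1/2^n`, where the index `i : Fin n` corresponds to `t_{i+1}`,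
so the digit `t i` gets divided by `2^{n - i}`. -/
noncomputable def hamX (n : ℕ) (t : Fin n → Bool) : ℝ :=
  ∑ i : Fin n, (if t i then (1 : ℝ) else 0) / 2 ^ (n - i.val)

/-- Second coordinate of a point of the Hammersley type point set:
`s_1/2 + s_2/2^2 + ⋯ + s_n/2^n` with `s_i = t_i` if `σ i = false` and `s_i = 1 - t_i`
if `σ i = true`, i.e. `s_i = t_i XOR σ i`. -/
noncomputable def hamY (n : ℕ) (σ : Fin n → Bool) (t : Fin n → Bool) : ℝ :=
  ∑ i : Fin n, (if (t i).xor (σ i) then (1 : ℝ) else 0) / 2 ^ (i.val + 1)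

/-- The points of the symmetrized Hammersley type multiset `R̃_n`, parametrized by a digit
vector `t` and two reflection bits: `(x,y)`, `(x,1-y)`, `(1-x,y)`, `(1-x,1-y)`. -/
noncomputable def symPoint (n : ℕ) (σ : Fin n → Bool) (z : (Fin n → Bool) × Bool × Bool) :
    ℝ × ℝ :=
  (if z.2.1 then 1 - hamX n z.1 else hamX n z.1,
   if z.2.2 then 1 - hamY n σ z.1 else hamY n σ z.1)

/-- The local discrepancy function of the symmetrized Hammersley type multiset `R̃_n`
with `N = 2^{n+2}` points counted with multiplicity. -/
noncomputable def discSym (n : ℕ) (σ : Fin n → Bool) (t1 t2 : ℝ) : ℝ :=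
  (∑ z : (Fin n → Bool) × Bool × Bool,
      if (symPoint n σ z).1 < t1 ∧ (symPoint n σ z).2 < t2 then (1 : ℝ) else 0) / 2 ^ (n + 2)
    - t1 * t2

lemma haar_eq (k m : ℕ) (t : ℝ) :
    haar k m t = (Ico ((2 * m : ℝ) / 2 ^ (k + 1)) ((2 * m + 1 : ℝ) / 2 ^ (k + 1))).indicator
        (fun _ => (1:ℝ)) t
      - (Ico ((2 * m + 1 : ℝ) / 2 ^ (k + 1)) ((2 * m + 2 : ℝ) / 2 ^ (k + 1))).indicator
        (fun _ => (1:ℝ)) t := by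
  unfold haar
  simp only [indicator_apply, mem_Ico]
  split_ifs with h1 h2
  · exact absurd h2.1 (not_le.mpr h1.2)
  · norm_num
  · norm_num
  · norm_num

lemma measurable_haar (k m : ℕ) : Measurable (haar k m) := by
  rw [show haar k m = fun t => _ from funext (haar_eq k m)]
  exact ((measurable_const.indicator measurableSet_Ico).sub
    (measurable_const.indicator measurableSet_Ico))

lemma haar_abs_le (k m : ℕ) (t : ℝ) : |haar k m t| ≤ 1 := by
  unfold haar; split_ifs <;> norm_num

lemma integrableOn_Ico01 {f : ℝ → ℝ} (hf : Measurable f) (C : ℝ)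
    (hb : ∀ t ∈ Ico (0:ℝ) 1, |f t| ≤ C) : IntegrableOn f (Ico (0:ℝ) 1) := by
  have h1 : IntegrableOn (fun _ : ℝ => C) (Ico (0:ℝ) 1) :=
    integrableOn_const (by simp)
  refine h1.mono' hf.aestronglyMeasurable ?_
  exact (ae_restrict_iff' measurableSet_Ico).mpr (ae_of_all _ (by simpa [Real.norm_eq_abs] using hb))

lemma meas_step (y : ℝ) : Measurable (fun t : ℝ => if y < t then (1:ℝ) else 0) := by
  have : (fun t : ℝ => if y < t then (1:ℝ) else 0) = (Ioi y).indicator (fun _ => 1) := by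
    funext t; simp [indicator_apply, mem_Ioi]
  rw [this]; exact measurable_const.indicator measurableSet_Ioi

lemma int_id_Ico (u v : ℝ) (h : u ≤ v) : ∫ t in Ico u v, t = (v^2 - u^2)/2 := by
  rw [integral_Ico_eq_integral_Ioo, ← integral_Ioc_eq_integral_Ioo,
    ← intervalIntegral.integral_of_le h, integral_id]

lemma indicator_int (u v : ℝ) (huv : u ≤ v) (h0 : 0 ≤ u) (h1 : v ≤ 1) :
    ∫ t in Ico (0:ℝ) 1, (Ico u v).indicator (fun _ => (1:ℝ)) t = v - u := by
  rw [setIntegral_indicator measurableSet_Ico,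
    inter_eq_self_of_subset_right (Ico_subset_Ico h0 h1), setIntegral_const]
  simp [Real.volume_Ico, ENNReal.toReal_ofReal (by linarith : (0:ℝ) ≤ v - u), huv]

lemma indicator_int_id (u v : ℝ) (huv : u ≤ v) (h0 : 0 ≤ u) (h1 : v ≤ 1) :
    ∫ t in Ico (0:ℝ) 1, (Ico u v).indicator (fun x => x) t = (v^2 - u^2)/2 := by
  rw [setIntegral_indicator measurableSet_Ico,
    inter_eq_self_of_subset_right (Ico_subset_Ico h0 h1)]
  exact int_id_Ico u v huv

lemma step_int (y : ℝ) (h0 : 0 ≤ y) (h1 : y ≤ 1) :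
    ∫ t in Ico (0:ℝ) 1, (if y < t then (1:ℝ) else 0) = 1 - y := by
  have e : (fun t : ℝ => if y < t then (1:ℝ) else 0) = (Ioi y).indicator (fun _ => 1) := by
    funext t; simp [indicator_apply, mem_Ioi]
  rw [e, setIntegral_indicator measurableSet_Ioi]
  have e2 : Ico (0:ℝ) 1 ∩ Ioi y = Ioo y 1 := by
    ext t; simp only [mem_inter_iff, mem_Ico, mem_Ioi, mem_Ioo]
    constructor
    · rintro ⟨⟨_, h⟩, h'⟩; exact ⟨h', h⟩
    · rintro ⟨h', h⟩; exact ⟨⟨by linarith, h⟩, h'⟩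
  rw [e2, setIntegral_const]
  simp [Real.volume_Ioo, ENNReal.toReal_ofReal (by linarith : (0:ℝ) ≤ 1 - y), h1]

lemma two_mul_le (k m : ℕ) (hm : m < 2^k) : (2 * m + 2 : ℝ) ≤ 2 ^ (k + 1) := by
  have h1 : (m : ℝ) + 1 ≤ 2 ^ k := by exact_mod_cast hm
  calc (2 * m + 2 : ℝ) = 2 * (m + 1) := by ring
    _ ≤ 2 * 2 ^ k := by linarith
    _ = 2 ^ (k + 1) := by rw [pow_succ]; ring

lemma haar_int0 (k m : ℕ) (hm : m < 2^k) : ∫ t in Ico (0:ℝ) 1, haar k m t = 0 := by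
  have hK : (0:ℝ) < 2 ^ (k + 1) := by positivity
  have h2 := two_mul_le k m hm
  have i1 : IntegrableOn ((Ico ((2 * m : ℝ) / 2 ^ (k + 1)) ((2 * m + 1 : ℝ) / 2 ^ (k + 1))).indicator
      (fun _ => (1:ℝ))) (Ico (0:ℝ) 1) :=
    (integrableOn_const (by simp)).indicator measurableSet_Ico
  have i2 : IntegrableOn ((Ico ((2 * m + 1 : ℝ) / 2 ^ (k + 1)) ((2 * m + 2 : ℝ) / 2 ^ (k + 1))).indicator
      (fun _ => (1:ℝ))) (Ico (0:ℝ) 1) :=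
    (integrableOn_const (by simp)).indicator measurableSet_Ico
  simp only [haar_eq]
  rw [integral_sub i1 i2, indicator_int _ _ (by gcongr; linarith) (by positivity)
      (by rw [div_le_one hK]; linarith),
    indicator_int _ _ (by gcongr; linarith) (by positivity) (by rw [div_le_one hK]; linarith)]
  ring

lemma haar_int1 (k m : ℕ) (hm : m < 2^k) :
    ∫ t in Ico (0:ℝ) 1, t * haar k m t = -(1 / 2 ^ (2*k + 2)) := by
  have hK : (0:ℝ) < 2 ^ (k + 1) := by positivity
  have h2 := two_mul_le k m hm
  have key : ∀ t : ℝ, t * haar k m t =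
      (Ico ((2 * m : ℝ) / 2 ^ (k + 1)) ((2 * m + 1 : ℝ) / 2 ^ (k + 1))).indicator (fun x => x) t
      - (Ico ((2 * m + 1 : ℝ) / 2 ^ (k + 1)) ((2 * m + 2 : ℝ) / 2 ^ (k + 1))).indicator (fun x => x) t := by
    intro t
    rw [haar_eq]
    simp only [indicator_apply]
    split_ifs <;> ring
  have i1 : IntegrableOn ((Ico ((2 * m : ℝ) / 2 ^ (k + 1)) ((2 * m + 1 : ℝ) / 2 ^ (k + 1))).indicator
      (fun x : ℝ => x)) (Ico (0:ℝ) 1) :=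
    (integrableOn_Ico01 measurable_id 1 (by intro t ht; simp [abs_le]; constructor <;> [linarith [ht.1]; linarith [ht.2]])).indicator measurableSet_Ico
  have i2 : IntegrableOn ((Ico ((2 * m + 1 : ℝ) / 2 ^ (k + 1)) ((2 * m + 2 : ℝ) / 2 ^ (k + 1))).indicator
      (fun x : ℝ => x)) (Ico (0:ℝ) 1) :=
    (integrableOn_Ico01 measurable_id 1 (by intro t ht; simp [abs_le]; constructor <;> [linarith [ht.1]; linarith [ht.2]])).indicator measurableSet_Ico
  simp only [key]
  rw [integral_sub i1 i2, indicator_int_id _ _ (by gcongr; linarith) (by positivity)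
      (by rw [div_le_one hK]; linarith),
    indicator_int_id _ _ (by gcongr; linarith) (by positivity) (by rw [div_le_one hK]; linarith)]
  have hKK : ((2:ℝ) ^ (k+1)) ^ 2 = 2 ^ (2*k + 2) := by
    rw [← pow_mul]; congr 1; omega
  simp only [div_pow, hKK]
  field_simp
  ring

lemma step_haar_int_zero (k m q : ℕ) (hm : m < 2^k) :
    ∫ t in Ico (0:ℝ) 1, (if (q:ℝ)/2^k < t then (1:ℝ) else 0) * haar k m t = 0 := by
  have hK : (0:ℝ) < 2 ^ (k + 1) := by positivity
  have hk0 : (0:ℝ) < 2 ^ k := by positivity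
  have hKk : (2:ℝ) ^ (k+1) = 2 ^ k * 2 := by rw [pow_succ]
  rcases le_or_gt q m with h | h
  · -- q/2^k ≤ 2m/2^(k+1)
    have hq : (q:ℝ) ≤ m := by exact_mod_cast h
    have hya : (q:ℝ)/2^k ≤ (2 * m : ℝ) / 2 ^ (k + 1) := by
      rw [div_le_div_iff₀ hk0 hK, hKk]; ring_nf; nlinarith [hk0]
    have hcongr : (fun t : ℝ => (if (q:ℝ)/2^k < t then (1:ℝ) else 0) * haar k m t)
        =ᵐ[volume.restrict (Ico (0:ℝ) 1)] haar k m := by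
      have hnull : (volume.restrict (Ico (0:ℝ) 1)) {(2 * m : ℝ) / 2 ^ (k + 1)} = 0 :=
        le_antisymm (le_trans (Measure.restrict_apply_le _ _) (by simp)) (by simp)
      have hae : ∀ᵐ t ∂(volume.restrict (Ico (0:ℝ) 1)), t ≠ (2 * m : ℝ) / 2 ^ (k + 1) := by
        rw [ae_iff]
        refine measure_mono_null (fun t ht => ?_) hnull
        simpa using ht
      filter_upwards [hae] with t ht
      by_cases hP : (q:ℝ)/2^k < t
      · simp [hP]
      · have htA : t ≤ (2 * m : ℝ) / 2 ^ (k + 1) := le_trans (not_lt.mp hP) hya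
        have hab : (2 * m : ℝ) / 2 ^ (k + 1) < (2 * m + 1 : ℝ) / 2 ^ (k + 1) := by gcongr; linarith
        simp only [hP, if_false, zero_mul]
        unfold haar
        split_ifs with hc1 hc2
        · exact absurd (le_antisymm htA hc1.1) ht
        · exfalso; linarith [hc2.1]
        · rfl
    rw [integral_congr_ae hcongr, haar_int0 k m hm]
  · -- (m+1) ≤ q : y ≥ C
    have hq : (m:ℝ) + 1 ≤ (q:ℝ) := by exact_mod_cast h
    have hyc : (2 * m + 2 : ℝ) / 2 ^ (k + 1) ≤ (q:ℝ)/2^k := by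
      rw [div_le_div_iff₀ hK hk0, hKk]; nlinarith [hk0]
    have hzero : ∀ t : ℝ, (if (q:ℝ)/2^k < t then (1:ℝ) else 0) * haar k m t = 0 := by
      intro t
      by_cases hP : (q:ℝ)/2^k < t
      · have hbc : (2 * m + 1 : ℝ) / 2 ^ (k + 1) ≤ (2 * m + 2 : ℝ) / 2 ^ (k + 1) := by
          gcongr <;> linarith
        simp only [hP, if_true, one_mul]
        unfold haar
        split_ifs with hc1 hc2
        · exfalso; linarith [hc1.2]
        · exfalso; linarith [hc2.2]
        · rfl
      · simp [hP]
    simp only [hzero, integral_zero]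

lemma sum_two_pow (n : ℕ) : ∑ i ∈ Finset.range n, 2^i = 2^n - 1 := by
  induction n with
  | zero => simp
  | succ n ih => rw [Finset.sum_range_succ, ih]; have := Nat.one_le_two_pow (n := n); omega

lemma hamX_rep (n : ℕ) (t : Fin n → Bool) :
    ∃ p : ℕ, p < 2^n ∧ hamX n t = (p:ℝ)/2^n := by
  refine ⟨∑ i : Fin n, if t i then 2^(i:ℕ) else 0, ?_, ?_⟩
  · have h1 : (∑ i : Fin n, if t i then 2^(i:ℕ) else 0) ≤ ∑ i : Fin n, 2^(i:ℕ) :=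
      Finset.sum_le_sum (by intro i _; split <;> simp)
    have h2 : ∑ i : Fin n, 2^(i:ℕ) = 2^n - 1 := by
      rw [Fin.sum_univ_eq_sum_range]; exact sum_two_pow n
    have := Nat.one_le_two_pow (n := n)
    omega
  · unfold hamX
    rw [Nat.cast_sum, Finset.sum_div]
    apply Finset.sum_congr rfl
    intro i _
    have hi : (i:ℕ) < n := i.isLt
    have hpow : (2:ℝ)^n = 2^(n-(i:ℕ)) * 2^(i:ℕ) := by
      rw [← pow_add]; congr 1; omega
    split_ifs with h
    · push_cast
      rw [hpow]
      rw [div_mul_eq_div_div_swap]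
      rw [div_self (by positivity : ((2:ℝ)^(i:ℕ)) ≠ 0) ]
    · simp

lemma hamY_rep (n : ℕ) (σ t : Fin n → Bool) :
    ∃ p : ℕ, p < 2^n ∧ hamY n σ t = (p:ℝ)/2^n := by
  refine ⟨∑ i : Fin n, if (t i).xor (σ i) then 2^(n-1-(i:ℕ)) else 0, ?_, ?_⟩
  · have h1 : (∑ i : Fin n, if (t i).xor (σ i) then 2^(n-1-(i:ℕ)) else 0)
        ≤ ∑ i : Fin n, 2^(n-1-(i:ℕ)) :=
      Finset.sum_le_sum (by intro i _; split <;> simp)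
    have h2 : ∑ i : Fin n, 2^(n-1-(i:ℕ)) = 2^n - 1 := by
      rw [Fin.sum_univ_eq_sum_range (fun j => 2^(n-1-j)) n, Finset.sum_range_reflect (fun j => 2^j) n]
      exact sum_two_pow n
    have := Nat.one_le_two_pow (n := n)
    omega
  · unfold hamY
    rw [Nat.cast_sum, Finset.sum_div]
    apply Finset.sum_congr rfl
    intro i _
    have hi : (i:ℕ) < n := i.isLt
    have hpow : (2:ℝ)^n = 2^((i:ℕ)+1) * 2^(n-1-(i:ℕ)) := by
      rw [← pow_add]; congr 1; omega
    split_ifs with h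
    · push_cast
      rw [hpow, div_mul_eq_div_div_swap]
      rw [div_self (by positivity : ((2:ℝ)^(n-1-(i:ℕ))) ≠ 0)]
    · simp

lemma rep_scale (n k p : ℕ) (hk : n ≤ k) (hp : p ≤ 2^n) :
    ∃ q : ℕ, q ≤ 2^k ∧ (p:ℝ)/2^n = (q:ℝ)/2^k := by
  refine ⟨p * 2^(k-n), ?_, ?_⟩
  · calc p * 2^(k-n) ≤ 2^n * 2^(k-n) := Nat.mul_le_mul_right _ hp
      _ = 2^k := by rw [← pow_add]; congr 1; omega
  · have hpow : (2:ℝ)^k = 2^n * 2^(k-n) := by rw [← pow_add]; congr 1; omega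
    push_cast
    rw [hpow]
    rw [div_mul_eq_div_div_swap, mul_div_assoc, div_self (by positivity : ((2:ℝ)^(k-n)) ≠ 0), mul_one]

lemma coord_rep (n k : ℕ) (hk : n ≤ k) (x : ℝ) (refl : Bool)
    (hx : ∃ p : ℕ, p < 2^n ∧ x = (p:ℝ)/2^n) :
    ∃ q : ℕ, q ≤ 2^k ∧ (if refl then 1 - x else x) = (q:ℝ)/2^k := by
  obtain ⟨p, hp, hxe⟩ := hx
  cases refl with
  | false =>
    simpa [hxe] using rep_scale n k p hk hp.le
  | true =>
    have h1x : 1 - x = ((2^n - p : ℕ) : ℝ)/2^n := by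
      rw [hxe, Nat.cast_sub hp.le]
      push_cast
      rw [sub_div, div_self (by positivity : ((2:ℝ)^n) ≠ 0)]
    obtain ⟨q, hq, he⟩ := rep_scale n k (2^n - p) hk (by omega)
    exact ⟨q, hq, by rw [if_pos rfl, h1x, he]⟩

lemma symX_rep (n : ℕ) (σ : Fin n → Bool) (k : ℕ) (hk : n ≤ k)
    (z : (Fin n → Bool) × Bool × Bool) :
    ∃ q : ℕ, q ≤ 2^k ∧ (symPoint n σ z).1 = (q:ℝ)/2^k :=
  coord_rep n k hk (hamX n z.1) z.2.1 (hamX_rep n z.1)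

lemma symY_rep (n : ℕ) (σ : Fin n → Bool) (k : ℕ) (hk : n ≤ k)
    (z : (Fin n → Bool) × Bool × Bool) :
    ∃ q : ℕ, q ≤ 2^k ∧ (symPoint n σ z).2 = (q:ℝ)/2^k :=
  coord_rep n k hk (hamY n σ z.1) z.2.2 (hamY_rep n σ z.1)

lemma symY_mem (n : ℕ) (σ : Fin n → Bool) (z : (Fin n → Bool) × Bool × Bool) :
    0 ≤ (symPoint n σ z).2 ∧ (symPoint n σ z).2 ≤ 1 := by
  obtain ⟨q, hq, he⟩ := symY_rep n σ n le_rfl z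
  constructor
  · rw [he]; positivity
  · rw [he, div_le_one (by positivity)]
    exact_mod_cast hq

lemma int_step_haar (k m : ℕ) (y : ℝ) :
    IntegrableOn (fun t => (if y < t then (1:ℝ) else 0) * haar k m t) (Ico (0:ℝ) 1) := by
  refine integrableOn_Ico01 ((meas_step y).mul (measurable_haar k m)) 1 ?_
  intro t _
  rw [abs_mul]
  calc |if y < t then (1:ℝ) else 0| * |haar k m t| ≤ 1 * 1 := by
        apply mul_le_mul ?_ (haar_abs_le k m t) (abs_nonneg _) zero_le_one
        split_ifs <;> norm_num
    _ = 1 := by norm_num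

lemma int_id_haar (k m : ℕ) :
    IntegrableOn (fun t => t * haar k m t) (Ico (0:ℝ) 1) := by
  refine integrableOn_Ico01 (measurable_id.mul (measurable_haar k m)) 1 ?_
  intro t ht
  rw [abs_mul]
  calc |t| * |haar k m t| ≤ 1 * 1 := by
        apply mul_le_mul ?_ (haar_abs_le k m t) (abs_nonneg _) zero_le_one
        rw [abs_le]; exact ⟨by linarith [ht.1], by linarith [ht.2]⟩
    _ = 1 := by norm_num

lemma int_step_on (y : ℝ) :
    IntegrableOn (fun t : ℝ => if y < t then (1:ℝ) else 0) (Ico (0:ℝ) 1) := by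
  refine integrableOn_Ico01 (meas_step y) 1 ?_
  intro t _; split_ifs <;> norm_num

lemma int_id_on : IntegrableOn (fun t : ℝ => t) (Ico (0:ℝ) 1) := by
  refine integrableOn_Ico01 measurable_id 1 ?_
  intro t ht; rw [abs_le]; exact ⟨by linarith [ht.1], by linarith [ht.2]⟩

lemma inner1 (n : ℕ) (σ : Fin n → Bool) (k m : ℕ) (hk : n ≤ k) (hm : m < 2^k) (t1 : ℝ) :
    ∫ t2 in Ico (0:ℝ) 1, discSym n σ t1 t2 * haar k m t2 = t1 / 2^(2*k+2) := by
  have key : ∀ t2 : ℝ, discSym n σ t1 t2 * haar k m t2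
      = (∑ z : (Fin n → Bool) × Bool × Bool,
          (if (symPoint n σ z).1 < t1 then (1:ℝ) else 0) *
            ((if (symPoint n σ z).2 < t2 then (1:ℝ) else 0) * haar k m t2)) / 2 ^ (n + 2)
        - t1 * (t2 * haar k m t2) := by
    intro t2
    unfold discSym
    rw [sub_mul, div_mul_eq_mul_div, Finset.sum_mul]
    have hterm : ∀ z ∈ (Finset.univ : Finset ((Fin n → Bool) × Bool × Bool)),
        (if (symPoint n σ z).1 < t1 ∧ (symPoint n σ z).2 < t2 then (1:ℝ) else 0) * haar k m t2
        = (if (symPoint n σ z).1 < t1 then (1:ℝ) else 0) *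
            ((if (symPoint n σ z).2 < t2 then (1:ℝ) else 0) * haar k m t2) := by
      intro z _
      by_cases h1 : (symPoint n σ z).1 < t1 <;> by_cases h2 : (symPoint n σ z).2 < t2 <;>
        simp [h1, h2]
    rw [Finset.sum_congr rfl hterm]
    ring
  simp only [key]
  have hz : ∀ z ∈ (Finset.univ : Finset ((Fin n → Bool) × Bool × Bool)),
      Integrable (fun t2 => (if (symPoint n σ z).1 < t1 then (1:ℝ) else 0) *
        ((if (symPoint n σ z).2 < t2 then (1:ℝ) else 0) * haar k m t2))
        (volume.restrict (Ico (0:ℝ) 1)) :=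
    fun z _ => (int_step_haar k m _).const_mul _
  rw [integral_sub ((integrable_finset_sum _ hz).div_const _)
      ((int_id_haar k m).const_mul t1)]
  rw [integral_div, integral_finset_sum _ hz]
  have heach : ∀ z ∈ (Finset.univ : Finset ((Fin n → Bool) × Bool × Bool)),
      (∫ t2 in Ico (0:ℝ) 1, (if (symPoint n σ z).1 < t1 then (1:ℝ) else 0) *
        ((if (symPoint n σ z).2 < t2 then (1:ℝ) else 0) * haar k m t2)) = 0 := by
    intro z _
    obtain ⟨q, _, hq⟩ := symY_rep n σ k hk z
    rw [MeasureTheory.integral_const_mul]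
    simp only [hq]
    rw [step_haar_int_zero k m q hm, mul_zero]
  rw [Finset.sum_eq_zero heach, MeasureTheory.integral_const_mul, haar_int1 k m hm]
  ring

lemma inner2 (n : ℕ) (σ : Fin n → Bool) (k m : ℕ) (t1 : ℝ) :
    ∫ t2 in Ico (0:ℝ) 1, discSym n σ t1 t2 * haar k m t1
    = (∑ z : (Fin n → Bool) × Bool × Bool,
        (1 - (symPoint n σ z).2) *
          ((if (symPoint n σ z).1 < t1 then (1:ℝ) else 0) * haar k m t1)) / 2 ^ (n + 2)
      - (1/2) * (t1 * haar k m t1) := by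
  rw [MeasureTheory.integral_mul_const]
  have key : ∀ t2 : ℝ, discSym n σ t1 t2
      = (∑ z : (Fin n → Bool) × Bool × Bool,
          (if (symPoint n σ z).1 < t1 then (1:ℝ) else 0) *
            (if (symPoint n σ z).2 < t2 then (1:ℝ) else 0)) / 2 ^ (n + 2)
        - t1 * t2 := by
    intro t2
    unfold discSym
    congr 2
    apply Finset.sum_congr rfl
    intro z _
    by_cases h1 : (symPoint n σ z).1 < t1 <;> by_cases h2 : (symPoint n σ z).2 < t2 <;>
      simp [h1, h2]
  simp only [key]
  have hz : ∀ z ∈ (Finset.univ : Finset ((Fin n → Bool) × Bool × Bool)),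
      Integrable (fun t2 => (if (symPoint n σ z).1 < t1 then (1:ℝ) else 0) *
        (if (symPoint n σ z).2 < t2 then (1:ℝ) else 0))
        (volume.restrict (Ico (0:ℝ) 1)) :=
    fun z _ => (int_step_on _).const_mul _
  rw [integral_sub ((integrable_finset_sum _ hz).div_const _) (int_id_on.const_mul t1)]
  rw [integral_div, integral_finset_sum _ hz]
  have heach : ∀ z ∈ (Finset.univ : Finset ((Fin n → Bool) × Bool × Bool)),
      (∫ t2 in Ico (0:ℝ) 1, (if (symPoint n σ z).1 < t1 then (1:ℝ) else 0) *
        (if (symPoint n σ z).2 < t2 then (1:ℝ) else 0))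
      = (if (symPoint n σ z).1 < t1 then (1:ℝ) else 0) * (1 - (symPoint n σ z).2) := by
    intro z _
    obtain ⟨hy0, hy1⟩ := symY_mem n σ z
    rw [MeasureTheory.integral_const_mul, step_int _ hy0 hy1]
  rw [Finset.sum_congr rfl heach, MeasureTheory.integral_const_mul, int_id_Ico 0 1 zero_le_one]
  rw [sub_mul, div_mul_eq_mul_div, Finset.sum_mul]
  have hterm : ∀ z ∈ (Finset.univ : Finset ((Fin n → Bool) × Bool × Bool)),
      ((if (symPoint n σ z).1 < t1 then (1:ℝ) else 0) * (1 - (symPoint n σ z).2)) * haar k m t1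
      = (1 - (symPoint n σ z).2) *
          ((if (symPoint n σ z).1 < t1 then (1:ℝ) else 0) * haar k m t1) := by
    intro z _; ring
  rw [Finset.sum_congr rfl hterm]
  ring

/-- Proposition (v): for the local discrepancy `D` of the symmetrized Hammersley type
multiset `R̃_n`, for `k ≥ n` and `m ∈ {0,…,2^k-1}` it holds
`|μ_{(-1,k),(0,m)}(D)| = |μ_{(k,-1),(m,0)}(D)| = 2^{-(2k+3)}`. -/
theorem disc_haar_coeff_neg_large (n : ℕ) (σ : Fin n → Bool) (k m : ℕ)
    (hk : n ≤ k) (hm : m < 2 ^ k) :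
    |∫ t1 in Set.Ico (0 : ℝ) 1, ∫ t2 in Set.Ico (0 : ℝ) 1,
      discSym n σ t1 t2 * haar k m t2| = 1 / 2 ^ (2 * k + 3) ∧
    |∫ t1 in Set.Ico (0 : ℝ) 1, ∫ t2 in Set.Ico (0 : ℝ) 1,
      discSym n σ t1 t2 * haar k m t1| = 1 / 2 ^ (2 * k + 3) := by
  have hpow : (2:ℝ) ^ (2*k+3) = 2 ^ (2*k+2) * 2 := by rw [pow_succ]
  constructor
  · simp only [inner1 n σ k m hk hm]
    rw [integral_div, int_id_Ico 0 1 zero_le_one]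
    rw [abs_of_pos (by positivity)]
    rw [hpow]; norm_num; ring
  · simp only [inner2 n σ k m]
    have hz : ∀ z ∈ (Finset.univ : Finset ((Fin n → Bool) × Bool × Bool)),
        Integrable (fun t1 => (1 - (symPoint n σ z).2) *
          ((if (symPoint n σ z).1 < t1 then (1:ℝ) else 0) * haar k m t1))
          (volume.restrict (Ico (0:ℝ) 1)) :=
      fun z _ => (int_step_haar k m _).const_mul _
    rw [integral_sub ((integrable_finset_sum _ hz).div_const _)
        ((int_id_haar k m).const_mul (1/2))]
    rw [integral_div, integral_finset_sum _ hz]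
    have heach : ∀ z ∈ (Finset.univ : Finset ((Fin n → Bool) × Bool × Bool)),
        (∫ t1 in Ico (0:ℝ) 1, (1 - (symPoint n σ z).2) *
          ((if (symPoint n σ z).1 < t1 then (1:ℝ) else 0) * haar k m t1)) = 0 := by
      intro z _
      obtain ⟨q, _, hq⟩ := symX_rep n σ k hk z
      rw [MeasureTheory.integral_const_mul]
      simp only [hq]
      rw [step_haar_int_zero k m q hm, mul_zero]
    rw [Finset.sum_eq_zero heach, MeasureTheory.integral_const_mul, haar_int1 k m hm]
    have e : (0:ℝ)/2^(n+2) - 1/2 * -(1/2^(2*k+2)) = 1/2^(2*k+3) := by rw [hpow]; ring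
    rw [e, abs_of_pos (by positivity)]
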